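/- Let y* ∈ S(A,x*) where S denotes the spindle. Then S(A,y*) ⊆ S(A,x*). -/
import Mathlib


open Matrix

/-- The sign cone `C(A, x*)` of a point `x*` with respect to a matrix `A`. -/
def coneC {m n : ℕ} (A : Matrix (Fin m) (Fin n) ℝ) (xs : Fin n → ℝ) : Set (Fin n → ℝ) :=
  {x | ∀ i, (A.mulVec xs i ≠ 0 → 0 ≤ Real.sign (A.mulVec xs i) * A.mulVec x i) ∧
            (A.mulVec xs i = 0 → A.mulVec x i = 0)}

/-- The spindle `S(A, x*) = C(A, x*) ∩ (x* − C(A, x*))`. -/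
def spindleS {m n : ℕ} (A : Matrix (Fin m) (Fin n) ℝ) (xs : Fin n → ℝ) : Set (Fin n → ℝ) :=
  coneC A xs ∩ {x | xs - x ∈ coneC A xs}

private lemma key (a b c : ℝ)
    (hb1 : a ≠ 0 → 0 ≤ Real.sign a * b) (hb0 : a = 0 → b = 0)
    (hab1 : a ≠ 0 → 0 ≤ Real.sign a * (a - b))
    (hc1 : b ≠ 0 → 0 ≤ Real.sign b * c) (hc0 : b = 0 → c = 0)
    (hbc1 : b ≠ 0 → 0 ≤ Real.sign b * (b - c)) :
    (a ≠ 0 → 0 ≤ Real.sign a * c) ∧ (a = 0 → c = 0) ∧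
    (a ≠ 0 → 0 ≤ Real.sign a * (a - c)) ∧ (a = 0 → a - c = 0) := by
  rcases eq_or_ne a 0 with ha | ha
  · have hb := hb0 ha
    have hc := hc0 hb
    exact ⟨fun h => absurd ha h, fun _ => hc, fun h => absurd ha h, fun _ => by rw [ha, hc]; ring⟩
  · rcases eq_or_ne b 0 with hb | hb
    · have hc := hc0 hb
      have hab := hab1 ha
      refine ⟨fun _ => by rw [hc]; simp, fun h => absurd h ha,
        fun _ => by rw [hc]; simpa [hb] using hab, fun h => absurd h ha⟩
    · have h1 := hb1 ha
      have h2 := hab1 ha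
      have h3 := hc1 hb
      have h4 := hbc1 hb
      have hsign : Real.sign b = Real.sign a := by
        rcases lt_trichotomy a 0 with hA | hA | hA
        · rw [Real.sign_of_neg hA] at h1 ⊢
          have hbneg : b < 0 := lt_of_le_of_ne (by linarith) hb
          rw [Real.sign_of_neg hbneg]
        · exact absurd hA ha
        · rw [Real.sign_of_pos hA] at h1 ⊢
          have hbpos : 0 < b := lt_of_le_of_ne (by linarith) (Ne.symm hb)
          rw [Real.sign_of_pos hbpos]
      rw [hsign] at h3 h4
      refine ⟨fun _ => h3, fun h => absurd h ha, fun _ => ?_, fun h => absurd h ha⟩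
      nlinarith

theorem stmt1 {m n : ℕ} (A : Matrix (Fin m) (Fin n) ℤ)
    (xs ys : Fin n → ℝ)
    (hys : ys ∈ spindleS (A.map (Int.cast : ℤ → ℝ)) xs) :
    spindleS (A.map (Int.cast : ℤ → ℝ)) ys ⊆ spindleS (A.map (Int.cast : ℤ → ℝ)) xs := by
  set B := A.map (Int.cast : ℤ → ℝ) with hB
  intro z hz
  obtain ⟨hy1, hy2⟩ := hys
  obtain ⟨hz1, hz2⟩ := hz
  simp only [spindleS, coneC, Set.mem_inter_iff, Set.mem_setOf_eq, Matrix.mulVec_sub] at *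
  constructor
  · intro i
    have K := key (B.mulVec xs i) (B.mulVec ys i) (B.mulVec z i)
      (hy1 i).1 (hy1 i).2 (hy2 i).1 (hz1 i).1 (hz1 i).2 (hz2 i).1
    exact ⟨K.1, K.2.1⟩
  · intro i
    have K := key (B.mulVec xs i) (B.mulVec ys i) (B.mulVec z i)
      (hy1 i).1 (hy1 i).2 (hy2 i).1 (hz1 i).1 (hz1 i).2 (hz2 i).1
    simp only [Pi.sub_apply]
    exact ⟨fun h => K.2.2.1 h, fun h => K.2.2.2 h⟩
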